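/- Let H be a supporting hyperplane of a polytope X. Then X ∩ H is a facet of X if and only if C_v(X) ∩ H is a facet of the tangent cone C_v(X) for every vertex v of X lying on H. -/

import Mathlib

open Set Finset

/-- A polytope: convex hull of finitely many points. -/
def IsPolytope {n : ℕ} (X : Set (Fin n → ℝ)) : Prop :=
  ∃ V : Finset (Fin n → ℝ), X = convexHull ℝ (V : Set (Fin n → ℝ))

/-- Affine dimension of a set. -/
noncomputable def adim {n : ℕ} (S : Set (Fin n → ℝ)) : ℕ :=
  Module.finrank ℝ (vectorSpan ℝ S)

/-- `F` is a facet of `X`: an exposed face of affine dimension one less than `X`. -/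
def IsFacet {n : ℕ} (X F : Set (Fin n → ℝ)) : Prop :=
  IsExposed ℝ X F ∧ adim F + 1 = adim X

/-- Two vertices of `X` are adjacent if the segment joining them is an exposed face. -/
def AdjVert {n : ℕ} (X : Set (Fin n → ℝ)) (u v : Fin n → ℝ) : Prop :=
  u ≠ v ∧ u ∈ X.extremePoints ℝ ∧ v ∈ X.extremePoints ℝ ∧
    IsExposed ℝ X (segment ℝ u v)

/-- The convex cone generated by a set: all nonnegative multiples of convex combinations. -/
def coneHull {n : ℕ} (S : Set (Fin n → ℝ)) : Set (Fin n → ℝ) :=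
  {0} ∪ {p | ∃ c : ℝ, 0 ≤ c ∧ ∃ z ∈ convexHull ℝ S, p = c • z}

/-- The tangent cone of `X` at a vertex `v`:
`v + cone{x - v : x an adjacent vertex of v}`. -/
def tangentCone {n : ℕ} (X : Set (Fin n → ℝ)) (v : Fin n → ℝ) : Set (Fin n → ℝ) :=
  {p | ∃ y ∈ coneHull {z | ∃ x, AdjVert X v x ∧ z = x - v}, p = v + y}

/-- The graph (1-skeleton) of a polytope `X`, with the vertices of `X` as nodes. -/
def polyGraph {n : ℕ} (X : Set (Fin n → ℝ)) : SimpleGraph (Fin n → ℝ) where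
  Adj := AdjVert X
  symm := by
    constructor
    intro u v h
    refine ⟨h.1.symm, h.2.2.1, h.2.1, ?_⟩
    rw [segment_symm]; exact h.2.2.2
  loopless := by constructor; intro u h; exact h.1 rfl

/-- Real point corresponding to an integer point. -/
def toR {d : ℕ} (x : Fin d → ℤ) : Fin d → ℝ := fun i => (x i : ℝ)

/-- Lexicographic order comparing from the last coordinate. -/
def lexLe {d : ℕ} (x y : Fin d → ℤ) : Prop :=
  x = y ∨ ∃ i : Fin d, x i < y i ∧ ∀ k : Fin d, i < k → x k = y k

/-- Graded lexicographic order. -/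
def grlexLe {d : ℕ} (x y : Fin d → ℤ) : Prop :=
  (∑ i, x i) < (∑ i, y i) ∨ ((∑ i, x i) = (∑ i, y i) ∧ lexLe x y)

/-- Graded reverse lexicographic order. -/
def grevlexLe {d : ℕ} (x y : Fin d → ℤ) : Prop :=
  (∑ i, x i) < (∑ i, y i) ∨ ((∑ i, x i) = (∑ i, y i) ∧ lexLe y x)

/-- The grlex polytope `P = conv{x ∈ ℤᵈ : 0 ≤ x ≼_grlex θ}`. -/
def grlexP (d : ℕ) (θ : Fin d → ℤ) : Set (Fin d → ℝ) :=
  convexHull ℝ {p | ∃ x : Fin d → ℤ, (∀ i, 0 ≤ x i) ∧ grlexLe x θ ∧ p = toR x}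

/-- The grevlex polytope `Q = conv{x ∈ ℤᵈ : 0 ≤ x ≼_grevlex θ}`. -/
def grevlexQ (d : ℕ) (θ : Fin d → ℤ) : Set (Fin d → ℝ) :=
  convexHull ℝ {p | ∃ x : Fin d → ℤ, (∀ i, 0 ≤ x i) ∧ grevlexLe x θ ∧ p = toR x}

/-- `b`, the total sum of `θ`. -/
def bsum {d : ℕ} (θ : Fin d → ℤ) : ℤ := ∑ i, θ i

/-- `b̃ₖ`, the sum of the first `k` coordinates of `θ` (`k` is 1-indexed). -/
def btil {d : ℕ} (θ : Fin d → ℤ) (k : ℕ) : ℤ :=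
  ∑ i ∈ Finset.univ.filter (fun i : Fin d => (i : ℕ) < k), θ i

/-- The vertex `w = (b-1)e_d` of `P`. -/
def wP (d : ℕ) (θ : Fin d → ℤ) : Fin d → ℤ :=
  fun i => if (i : ℕ) = d - 1 then bsum θ - 1 else 0

/-- The vertex `u^k = ((b̃_{k-1}+1)e_{k-1}, θ_k - 1, θ_{k+1}, …, θ_d)` of `P` (paper's
1-indexing: coordinate `j` of the paper is index `j-1` here). -/
def uP (d : ℕ) (θ : Fin d → ℤ) (k : ℕ) : Fin d → ℤ :=
  fun i => if (i : ℕ) = k - 2 then btil θ (k - 1) + 1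
    else if (i : ℕ) = k - 1 then θ i - 1
    else if k ≤ (i : ℕ) then θ i else 0

/-- The vertex `v^{j,k} = (b̃_k e_j, 0, …, 0, θ_{k+1}, …, θ_d)` of `P` (1-indexed). -/
def vP (d : ℕ) (θ : Fin d → ℤ) (j k : ℕ) : Fin d → ℤ :=
  fun i => if (i : ℕ) = j - 1 then btil θ k
    else if k ≤ (i : ℕ) then θ i else 0

/-- The point `b·e_j` (1-indexed `j`). -/
def beP (d : ℕ) (θ : Fin d → ℤ) (j : ℕ) : Fin d → ℤ :=
  fun i => if (i : ℕ) = j - 1 then bsum θ else 0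

/-- The vertex `u^k = (b̃_{k-1}e_{k-1}, θ_k, …, θ_d)` of `Q` (1-indexed, `2 ≤ k ≤ d+1`). -/
def uQ (d : ℕ) (θ : Fin d → ℤ) (k : ℕ) : Fin d → ℤ :=
  fun i => if (i : ℕ) = k - 2 then btil θ (k - 1)
    else if k - 1 ≤ (i : ℕ) then θ i else 0

/-- The vertex `v^{j,k} = ((b̃_{k-1}-1)e_j, 0, …, 0, θ_k + 1, θ_{k+1}, …, θ_d)` of `Q`. -/
def vQ (d : ℕ) (θ : Fin d → ℤ) (j k : ℕ) : Fin d → ℤ :=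
  fun i => if (i : ℕ) = j - 1 then btil θ (k - 1) - 1
    else if (i : ℕ) = k - 1 then θ i + 1
    else if k ≤ (i : ℕ) then θ i else 0

/-- Edge boundary of a vertex set in a graph. -/
def eboundary {V : Type*} (G : SimpleGraph V) (S : Set V) : Set (V × V) :=
  {p | G.Adj p.1 p.2 ∧ p.1 ∈ S ∧ p.2 ∉ S}


section Aux
variable {n : ℕ}


/-- Face lemma: a point of the hull where a linear functional attains the max over `S`
lies in the hull of the maximizers. -/
lemma mem_convexHull_max {S : Set (Fin n → ℝ)} (f : (Fin n → ℝ) →L[ℝ] ℝ) {a : ℝ}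
    (hS : ∀ s ∈ S, f s ≤ a) {x} (hx : x ∈ convexHull ℝ S) (hfx : f x = a) :
    x ∈ convexHull ℝ {s | s ∈ S ∧ f s = a} := by
  rw [_root_.convexHull_eq] at hx
  obtain ⟨ι, t, w, z, hw0, hw1, hz, rfl⟩ := hx
  have hcm : f (t.centerMass w z) = ∑ i ∈ t, w i * f (z i) := by
    rw [Finset.centerMass_eq_of_sum_1 _ _ hw1, map_sum]
    exact Finset.sum_congr rfl fun i hi => by rw [map_smul, smul_eq_mul]
  have hzero : ∑ i ∈ t, w i * (a - f (z i)) = 0 := by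
    have : ∑ i ∈ t, (w i * a - w i * f (z i)) = a - f (t.centerMass w z) := by
      rw [Finset.sum_sub_distrib, ← Finset.sum_mul, hw1, one_mul, hcm]
    simp only [mul_sub]
    rw [this, hfx, sub_self]
  have hall : ∀ i ∈ t, w i * (a - f (z i)) = 0 := by
    exact (Finset.sum_eq_zero_iff_of_nonneg (fun i hi =>
      mul_nonneg (hw0 i hi) (sub_nonneg.2 (hS _ (hz i hi))))).1 hzero
  have hx' : ({i ∈ t | w i ≠ 0} : Finset ι).centerMass w z = t.centerMass w z :=
    Finset.centerMass_filter_ne_zero _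
  rw [← hx']
  apply Finset.centerMass_mem_convexHull
  · intro i hi; exact hw0 i (Finset.mem_filter.1 hi).1
  · rw [Finset.sum_filter_ne_zero, hw1]; exact one_pos
  · intro i hi
    obtain ⟨hit, hwi⟩ := Finset.mem_filter.1 hi
    refine ⟨hz i hit, ?_⟩
    have := hall i hit
    rcases mul_eq_zero.1 this with h | h
    · exact absurd h hwi
    · linarith [sub_eq_zero.1 h]


lemma zero_mem_coneHull (S : Set (Fin n → ℝ)) : 0 ∈ coneHull S := Or.inl rfl

lemma smul_mem_coneHull {S : Set (Fin n → ℝ)} {c : ℝ} (hc : 0 ≤ c) {y : Fin n → ℝ}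
    (hy : y ∈ coneHull S) : c • y ∈ coneHull S := by
  rcases hy with h | ⟨d, hd, z, hz, rfl⟩
  · simp only [mem_singleton_iff] at h; subst h; simp [zero_mem_coneHull, coneHull]
  · exact Or.inr ⟨c * d, mul_nonneg hc hd, z, hz, (smul_smul c d z)⟩

lemma convexHull_subset_coneHull (S : Set (Fin n → ℝ)) : convexHull ℝ S ⊆ coneHull S :=
  fun z hz => Or.inr ⟨1, zero_le_one, z, hz, (one_smul ℝ z).symm⟩

lemma subset_coneHull (S : Set (Fin n → ℝ)) : S ⊆ coneHull S :=
  (subset_convexHull ℝ S).trans (convexHull_subset_coneHull S)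

lemma coneHull_convex (S : Set (Fin n → ℝ)) : Convex ℝ (coneHull S) := by
  rcases Set.eq_empty_or_nonempty (convexHull ℝ S) with h | ⟨z₀, hz₀⟩
  · have : coneHull S = {0} := by
      apply Set.Subset.antisymm
      · rintro p (hp | ⟨c, hc, z, hz, rfl⟩)
        · exact hp
        · rw [h] at hz; exact absurd hz (notMem_empty z)
      · exact fun p hp => Or.inl hp
    rw [this]; exact convex_singleton 0
  · have hcone : coneHull S = {p | ∃ c : ℝ, 0 ≤ c ∧ ∃ z ∈ convexHull ℝ S, p = c • z} := by
      apply Set.Subset.antisymm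
      · rintro p (hp | hp)
        · rw [mem_singleton_iff] at hp; exact ⟨0, le_refl 0, z₀, hz₀, by rw [hp, zero_smul]⟩
        · exact hp
      · exact fun p hp => Or.inr hp
    rw [hcone]
    rintro p ⟨c, hc, z, hz, rfl⟩ q ⟨d, hd, w, hw, rfl⟩ a b ha hb hab
    rcases eq_or_lt_of_le (add_nonneg (mul_nonneg ha hc) (mul_nonneg hb hd)) with h0 | h0
    · -- a*c + b*d = 0 hence a*c = 0, b*d = 0
      have h1 : a * c = 0 ∧ b * d = 0 := by
        constructor <;> nlinarith [mul_nonneg ha hc, mul_nonneg hb hd]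
      refine ⟨0, le_refl 0, z₀, hz₀, ?_⟩
      rw [smul_smul, smul_smul, h1.1, h1.2, zero_smul, zero_smul, add_zero, zero_smul]
    · set e := a * c + b * d with he
      refine ⟨e, le_of_lt h0, (a * c / e) • z + (b * d / e) • w, ?_, ?_⟩
      · exact (convex_convexHull ℝ S) hz hw (div_nonneg (mul_nonneg ha hc) h0.le)
          (div_nonneg (mul_nonneg hb hd) h0.le) (by field_simp; linarith)
      · rw [smul_add, smul_smul, smul_smul, smul_smul, smul_smul]
        rw [mul_div_cancel₀ _ (ne_of_gt h0), mul_div_cancel₀ _ (ne_of_gt h0)]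

/-- coneHull of a set in a submodule stays in the submodule. -/
lemma coneHull_subset_submodule {S : Set (Fin n → ℝ)} {W : Submodule ℝ (Fin n → ℝ)}
    (hS : S ⊆ (W : Set (Fin n → ℝ))) : coneHull S ⊆ (W : Set (Fin n → ℝ)) := by
  rintro p (hp | ⟨c, hc, z, hz, rfl⟩)
  · rw [mem_singleton_iff] at hp; subst hp; exact W.zero_mem
  · have : z ∈ (W : Set (Fin n → ℝ)) := convexHull_min hS (W.convex) hz
    exact W.smul_mem c this

/-- coneHull over a set where `f ≤ 0` satisfies `f ≤ 0`. -/
lemma coneHull_le_zero {S : Set (Fin n → ℝ)} (f : (Fin n → ℝ) →L[ℝ] ℝ)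
    (hS : ∀ s ∈ S, f s ≤ 0) {y : Fin n → ℝ} (hy : y ∈ coneHull S) : f y ≤ 0 := by
  rcases hy with h | ⟨c, hc, z, hz, rfl⟩
  · rw [mem_singleton_iff] at h; subst h; simp
  · have hz' : f z ≤ 0 :=
      convexHull_min hS (convex_halfSpace_le (f.toLinearMap.isLinear) 0) hz
    rw [map_smul, smul_eq_mul]
    exact mul_nonpos_of_nonneg_of_nonpos hc hz'


lemma polytope_isCompact {S : Set (Fin n → ℝ)} (hS : S.Finite) :
    IsCompact (convexHull ℝ S) := hS.isCompact_convexHull ℝ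

lemma convexHull_extremePoints_of_finite {S : Set (Fin n → ℝ)} (hS : S.Finite) :
    convexHull ℝ ((convexHull ℝ S).extremePoints ℝ) = convexHull ℝ S := by
  have h1 : ((convexHull ℝ S).extremePoints ℝ) ⊆ S := extremePoints_convexHull_subset
  have h2 : IsCompact (convexHull ℝ ((convexHull ℝ S).extremePoints ℝ)) :=
    (hS.subset h1).isCompact_convexHull ℝ
  have := closure_convexHull_extremePoints (hS.isCompact_convexHull ℝ) (convex_convexHull ℝ S)
  rw [h2.isClosed.closure_eq] at this
  exact this

lemma extremePoints_restrict {A B : Set (Fin n → ℝ)} (hBA : B ⊆ A) {x : Fin n → ℝ}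
    (hx : x ∈ A.extremePoints ℝ) (hxB : x ∈ B) : x ∈ B.extremePoints ℝ := by
  rw [mem_extremePoints] at hx ⊢
  exact ⟨hxB, fun x₁ h₁ x₂ h₂ hseg => hx.2 x₁ (hBA h₁) x₂ (hBA h₂) hseg⟩

lemma extreme_not_mem_hull_diff {X C : Set (Fin n → ℝ)} (hX : Convex ℝ X) (hC : C ⊆ X)
    {x : Fin n → ℝ} (hx : x ∈ X.extremePoints ℝ) (hxC : x ∉ C) : x ∉ convexHull ℝ C := by
  intro h
  exact hxC (extremePoints_convexHull_subset
    (extremePoints_restrict (convexHull_min hC hX) hx h))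

/-- At an extreme point of a polytope there is a strictly exposing functional. -/
lemma exists_strict_exposing {S : Set (Fin n → ℝ)} (hS : S.Finite) {q : Fin n → ℝ}
    (hq : q ∈ (convexHull ℝ S).extremePoints ℝ) :
    ∃ f : (Fin n → ℝ) →L[ℝ] ℝ, ∀ y ∈ convexHull ℝ S, y ≠ q → f y < f q := by
  set X := convexHull ℝ S with hXdef
  set E := X.extremePoints ℝ with hEdef
  have hEfin : E.Finite := hS.subset extremePoints_convexHull_subset
  have hXE : convexHull ℝ E = X := convexHull_extremePoints_of_finite hS
  set A := E \ {q} with hAdef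
  rcases Set.eq_empty_or_nonempty A with hA | hA
  · have hEq : E = {q} := by
      apply Set.Subset.antisymm
      · intro y hy
        by_contra hne
        exact absurd (Set.mem_diff_singleton.2 ⟨hy, hne⟩) (by rw [← hAdef, hA]; exact notMem_empty y)
      · exact Set.singleton_subset_iff.2 hq
    have : X = {q} := by rw [← hXE, hEq, convexHull_singleton]
    refine ⟨0, fun y hy hne => absurd (by rw [this] at hy; exact hy) ?_⟩
    simp [hne]
  · have hAX : A ⊆ X := (Set.diff_subset).trans extremePoints_subset
    have hqA : q ∉ convexHull ℝ A :=
      extreme_not_mem_hull_diff (convex_convexHull ℝ S) hAX hq (fun h => h.2 rfl)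
    obtain ⟨f, u, hfa, hfq⟩ := geometric_hahn_banach_closed_point
      (convex_convexHull ℝ A) ((hEfin.subset Set.diff_subset).isCompact_convexHull ℝ).isClosed hqA
    refine ⟨f, fun y hy hne => ?_⟩
    have hyE : y ∈ convexHull ℝ (insert q A) := by
      rw [hAdef, Set.insert_diff_singleton, Set.insert_eq_self.2 hq, hXE]; exact hy
    rw [convexHull_insert hA, mem_convexJoin] at hyE
    obtain ⟨a, ha, b, hb, hseg⟩ := hyE
    rw [Set.mem_singleton_iff] at ha
    obtain ⟨s, t, hs, ht, hst, hy'⟩ := hseg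
    rw [ha] at hy'
    subst hy'
    have ht' : t ≠ 0 := by
      intro h; subst h; rw [add_zero] at hst; subst hst
      simp at hne
    have hfb : f b < f q := lt_trans (hfa b hb) hfq
    have : f (s • q + t • b) = s * f q + t * f b := by
      rw [map_add, map_smul, map_smul]; rfl
    rw [this]
    calc s * f q + t * f b < s * f q + t * f q := by
          apply add_lt_add_right
          exact mul_lt_mul_of_pos_left hfb (lt_of_le_of_ne ht (Ne.symm ht'))
      _ = f q := by rw [← add_mul, hst, one_mul]

end Aux


section Main
variable {n : ℕ}

lemma clm_centerMass {ι : Type} (f : (Fin n → ℝ) →L[ℝ] ℝ) (t : Finset ι) (w : ι → ℝ)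
    (z : ι → Fin n → ℝ) (hw1 : ∑ i ∈ t, w i = 1) :
    f (t.centerMass w z) = ∑ i ∈ t, w i * f (z i) := by
  rw [Finset.centerMass_eq_of_sum_1 _ _ hw1, map_sum]
  exact Finset.sum_congr rfl fun i hi => by rw [map_smul, smul_eq_mul]

lemma clm_affine (f : (Fin n → ℝ) →L[ℝ] ℝ) (v w : Fin n → ℝ) (c : ℝ) :
    f (v + c • (w - v)) = f v + c * (f w - f v) := by
  rw [map_add, map_smul, map_sub, smul_eq_mul]

/-- Step A: slice points are in the hull of edge-direction points. -/
lemma stepA {A : Set (Fin n → ℝ)} (f : (Fin n → ℝ) →L[ℝ] ℝ) {v : Fin n → ℝ} {m t : ℝ}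
    (hm : ∀ s ∈ A, f s ≤ m) (hmt : m < t) (htv : t < f v) {x : Fin n → ℝ}
    (hx : x ∈ convexHull ℝ (insert v A)) (hfx : f x = t) :
    x ∈ convexHull ℝ ((fun s => v + ((f v - t) / (f v - f s)) • (s - v)) '' A) := by
  set lam : (Fin n → ℝ) → ℝ := fun s => (f v - t) / (f v - f s) with hlam
  set pm : (Fin n → ℝ) → (Fin n → ℝ) := fun s => v + lam s • (s - v) with hpm
  rcases Set.eq_empty_or_nonempty A with hA | hA
  · have h0 : (insert v A : Set (Fin n → ℝ)) = {v} := by rw [hA]; simp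
    rw [h0, convexHull_singleton, Set.mem_singleton_iff] at hx
    subst hx; rw [hfx] at htv; exact absurd htv (lt_irrefl t)
  rw [convexHull_insert hA, mem_convexJoin] at hx
  obtain ⟨a', ha', z, hz, hseg⟩ := hx
  rw [Set.mem_singleton_iff] at ha'
  obtain ⟨a, b, ha, hb, hab, hxeq⟩ := hseg
  rw [ha'] at hxeq
  have hfz : f z ≤ m :=
    convexHull_min hm (convex_halfSpace_le (f.toLinearMap.isLinear) m) hz
  have haux : f (a • v + b • z) = a * f v + b * f z := by
    rw [map_add, map_smul, map_smul, smul_eq_mul, smul_eq_mul]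
  have hfx' : a * f v + b * f z = t := by rw [← haux, hxeq, hfx]
  have hbpos : 0 < b := by
    rcases lt_or_eq_of_le hb with h | h
    · exact h
    · exfalso
      have ha1 : a = 1 := by linarith
      rw [← h, ha1, one_mul, mul_comm, mul_zero, add_zero] at hfx'
      linarith
  rw [_root_.convexHull_eq] at hz
  obtain ⟨ι, tt, w, zz, hw0, hw1, hzz, hcm⟩ := hz
  have hfzz : ∀ j ∈ tt, f (zz j) ≤ m := fun j hj => hm _ (hzz j hj)
  have hlampos : ∀ j ∈ tt, 0 < lam (zz j) := fun j hj =>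
    div_pos (by linarith) (by have := hfzz j hj; linarith)
  set μ : ι → ℝ := fun j => b * w j / lam (zz j) with hμ
  have hμ0 : ∀ j ∈ tt, 0 ≤ μ j := fun j hj =>
    div_nonneg (mul_nonneg hb (hw0 j hj)) (hlampos j hj).le
  have hfz_eq : f z = ∑ j ∈ tt, w j * f (zz j) := by
    rw [← hcm]; exact clm_centerMass f tt w zz hw1
  have hbfvz : b * (f v - f z) = f v - t := by linear_combination f v * hab - hfx'
  have key : ∀ j ∈ tt, μ j * (f v - t) = b * w j * (f v - f (zz j)) := by
    intro j hj
    have h2 : (0:ℝ) < f v - f (zz j) := by have := hfzz j hj; linarith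
    have h3 : (0:ℝ) < f v - t := by linarith
    rw [hμ]; simp only [hlam]
    field_simp
  have hμsum : ∑ j ∈ tt, μ j = 1 := by
    have hsum2 : ∑ j ∈ tt, b * w j * (f v - f (zz j)) = f v - t := by
      calc ∑ j ∈ tt, b * w j * (f v - f (zz j))
          = ∑ j ∈ tt, (b * f v * w j - b * (w j * f (zz j))) :=
            Finset.sum_congr rfl fun j _ => by ring
        _ = b * f v * (∑ j ∈ tt, w j) - b * ∑ j ∈ tt, w j * f (zz j) := by
            rw [Finset.sum_sub_distrib, ← Finset.mul_sum, ← Finset.mul_sum]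
        _ = f v - t := by rw [hw1, ← hfz_eq]; nlinarith
    have h3 : (f v - t) ≠ 0 := by intro h; linarith
    have : (∑ j ∈ tt, μ j) * (f v - t) = f v - t := by
      rw [Finset.sum_mul]
      rw [Finset.sum_congr rfl key, hsum2]
    exact mul_right_cancel₀ h3 (by rw [this, one_mul])
  have hμlam : ∀ j ∈ tt, μ j * lam (zz j) = b * w j := by
    intro j hj
    rw [hμ]
    exact div_mul_cancel₀ _ (hlampos j hj).ne'
  have hzsum : ∑ j ∈ tt, w j • zz j = z := by
    rw [← hcm, Finset.centerMass_eq_of_sum_1 _ _ hw1]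
  have hxcm : tt.centerMass μ (fun j => pm (zz j)) = x := by
    rw [Finset.centerMass_eq_of_sum_1 _ _ hμsum]
    have e1 : ∀ j ∈ tt, μ j • pm (zz j) = μ j • v + (b * w j) • (zz j - v) := by
      intro j hj
      simp only [hpm]
      rw [smul_add, smul_smul, hμlam j hj]
    rw [Finset.sum_congr rfl e1, Finset.sum_add_distrib, ← Finset.sum_smul, hμsum, one_smul]
    have e2 : ∑ j ∈ tt, (b * w j) • (zz j - v) = b • (z - v) := by
      calc ∑ j ∈ tt, (b * w j) • (zz j - v)
          = ∑ j ∈ tt, ((b * w j) • zz j - (b * w j) • v) :=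
            Finset.sum_congr rfl fun j _ => smul_sub _ _ _
        _ = (∑ j ∈ tt, b • (w j • zz j)) - (∑ j ∈ tt, b * w j) • v := by
            rw [Finset.sum_sub_distrib, Finset.sum_smul]
            congr 1
            exact Finset.sum_congr rfl fun j _ => by rw [← smul_smul]
        _ = b • (∑ j ∈ tt, w j • zz j) - b • v := by
            rw [← Finset.smul_sum, ← Finset.mul_sum, hw1, mul_one]
        _ = b • (z - v) := by rw [hzsum, smul_sub]
    rw [e2, ← hxeq, show a = 1 - b by linarith]
    module
  rw [← hxcm]
  exact Finset.centerMass_mem_convexHull tt hμ0 (by rw [hμsum]; exact one_pos)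
    (fun j hj => Set.mem_image_of_mem _ (hzz j hj))

/-- The exposed face of a hull determined by the maximizers of a functional. -/
lemma exposed_face_eq {S : Set (Fin n → ℝ)} (f : (Fin n → ℝ) →L[ℝ] ℝ) {a : ℝ}
    (hmax : ∀ s ∈ S, f s ≤ a) (hatt : ∃ s ∈ S, f s = a) :
    {x | x ∈ convexHull ℝ S ∧ ∀ y ∈ convexHull ℝ S, f y ≤ f x} =
      convexHull ℝ {s | s ∈ S ∧ f s = a} := by
  have hfa : ∀ y ∈ convexHull ℝ S, f y ≤ a := fun y hy =>
    convexHull_min hmax (convex_halfSpace_le (f.toLinearMap.isLinear) a) hy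
  apply Set.Subset.antisymm
  · rintro x ⟨hxX, hxmax⟩
    obtain ⟨s₀, hs₀S, hfs₀⟩ := hatt
    have hx : f x = a := le_antisymm (hfa x hxX)
      (by rw [← hfs₀]; exact hxmax s₀ (subset_convexHull ℝ S hs₀S))
    exact mem_convexHull_max f hmax hxX hx
  · intro x hx
    have hsub : {s | s ∈ S ∧ f s = a} ⊆ S := fun s hs => hs.1
    have hxX : x ∈ convexHull ℝ S := convexHull_mono hsub hx
    have hfx : f x = a := convexHull_min (fun s hs => hs.2)
      (convex_hyperplane (f.toLinearMap.isLinear) a) hx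
    exact ⟨hxX, fun y hy => (hfa y hy).trans hfx.symm.le⟩

lemma extreme_open_seg {Xs : Set (Fin n → ℝ)} {x x₁ x₂ : Fin n → ℝ}
    (hx : x ∈ Xs.extremePoints ℝ) (h₁ : x₁ ∈ Xs) (h₂ : x₂ ∈ Xs)
    (hseg : x ∈ openSegment ℝ x₁ x₂) : x₁ = x ∧ x₂ = x :=
  (mem_extremePoints.1 hx).2 x₁ h₁ x₂ h₂ hseg

/-- The central geometric fact: a polytope is contained in the tangent cone
at each of its vertices. -/
lemma polytope_subset_tangentCone {X : Set (Fin n → ℝ)} (hXp : IsPolytope X)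
    {v : Fin n → ℝ} (hv : v ∈ X.extremePoints ℝ) : X ⊆ tangentCone X v := by
  classical
  obtain ⟨V, hXV⟩ := hXp
  have hSfin : (X.extremePoints ℝ).Finite :=
    V.finite_toSet.subset (by rw [hXV]; exact extremePoints_convexHull_subset)
  have hXS : convexHull ℝ (X.extremePoints ℝ) = X := by
    conv_lhs => rw [hXV]
    rw [hXV]
    exact convexHull_extremePoints_of_finite V.finite_toSet
  have hXconv : Convex ℝ X := hXV ▸ convex_convexHull ℝ _
  have hvX : v ∈ X := extremePoints_subset hv
  set D := {z | ∃ x, AdjVert X v x ∧ z = x - v} with hD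
  suffices h : ∀ x ∈ X, x - v ∈ coneHull D by
    intro x hx
    exact ⟨x - v, h x hx, by abel⟩
  set A := (X.extremePoints ℝ) \ {v} with hA
  have hAfin : A.Finite := hSfin.subset Set.diff_subset
  have hAX : A ⊆ X := (Set.diff_subset).trans extremePoints_subset
  have hSin : insert v A = X.extremePoints ℝ := by
    rw [hA, Set.insert_diff_singleton, Set.insert_eq_self.2 hv]
  rcases Set.eq_empty_or_nonempty A with hAe | hAne
  · have hXv : X = {v} := by
      rw [← hXS, ← hSin, hAe]
      simp
    intro x hx
    rw [hXv, Set.mem_singleton_iff] at hx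
    subst hx
    rw [sub_self]
    exact zero_mem_coneHull D
  -- strictly exposing functional at v
  have hv' : v ∈ (convexHull ℝ (X.extremePoints ℝ)).extremePoints ℝ := by rw [hXS]; exact hv
  obtain ⟨f, hf⟩ := exists_strict_exposing hSfin hv'
  rw [hXS] at hf
  -- the max of f over A
  obtain ⟨s₁, hs₁A, hs₁max⟩ := Set.exists_max_image A f hAfin hAne
  set m := f s₁ with hm
  have hmv : m < f v := hf s₁ (hAX hs₁A) (fun h => hs₁A.2 (by rw [h]; rfl))
  set t := (m + f v) / 2 with ht
  have hmt : m < t := by rw [ht]; linarith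
  have htv : t < f v := by rw [ht]; linarith
  set lam : (Fin n → ℝ) → ℝ := fun s => (f v - t) / (f v - f s) with hlam
  set pm : (Fin n → ℝ) → (Fin n → ℝ) := fun s => v + ((f v - t) / (f v - f s)) • (s - v) with hpm
  have hmA : ∀ s ∈ A, f s ≤ m := hs₁max
  have hlampos : ∀ s ∈ A, 0 < lam s := fun s hs =>
    div_pos (by linarith) (by have := hmA s hs; linarith)
  have hfpm : ∀ s ∈ A, f (pm s) = t := by
    intro s hs
    have h2 : f v - f s ≠ 0 := by have := hmA s hs; intro hcon; linarith
    rw [hpm]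
    rw [clm_affine]
    field_simp
    ring
  set Y := convexHull ℝ (pm '' A) with hY
  have hYfin : (pm '' A).Finite := hAfin.image _
  -- Step B : extreme points of Y lie on edges at v
  have hB : ∀ q ∈ Y.extremePoints ℝ, q - v ∈ coneHull D := by
    intro q hq
    obtain ⟨u₀, hu₀A, hqdef⟩ := extremePoints_convexHull_subset hq
    have hu₀X : u₀ ∈ X := hAX hu₀A
    have hu₀v : u₀ ≠ v := fun h => hu₀A.2 (by rw [h]; rfl)
    have hl0 : 0 < lam u₀ := hlampos u₀ hu₀A
    have hfq : f q = t := by rw [← hqdef]; exact hfpm u₀ hu₀A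
    -- uniqueness of the generator
    have huniq : ∀ s ∈ A, pm s = q → s = u₀ := by
      intro s hsA hps
      have hlspos : 0 < lam s := hlampos s hsA
      have hss : lam s • (s - v) = lam u₀ • (u₀ - v) := by
        have h1 : pm s = pm u₀ := by rw [hps, ← hqdef]
        rw [hpm] at h1
        simp only at h1
        exact add_left_cancel h1
      set r := (lam s)⁻¹ * lam u₀ with hr
      have hr0 : 0 < r := mul_pos (inv_pos.2 hlspos) hl0
      have hsv : s - v = r • (u₀ - v) := by
        have h2 := congrArg (fun y => (lam s)⁻¹ • y) hss
        simp only [smul_smul, inv_mul_cancel₀ hlspos.ne', one_smul] at h2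
        rw [h2, hr]
      have hsX : s ∈ X := hAX hsA
      have hsvne : s ≠ v := fun h => hsA.2 (by rw [h]; rfl)
      rcases lt_trichotomy r 1 with hrlt | hreq | hrgt
      · exfalso
        have hmem : s ∈ openSegment ℝ v u₀ := by
          refine ⟨1 - r, r, by linarith, hr0, by ring, ?_⟩
          have : s = v + r • (u₀ - v) := by
            rw [← hsv]; abel
          rw [this]
          module
        have := extreme_open_seg hsA.1 hvX hu₀X hmem
        exact hsvne this.1.symm
      · rw [hreq, one_smul] at hsv
        exact sub_left_injective hsv
      · exfalso
        have hu₀v' : u₀ - v = r⁻¹ • (s - v) := by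
          rw [hsv, smul_smul, inv_mul_cancel₀ hr0.ne', one_smul]
        have hmem : u₀ ∈ openSegment ℝ v s := by
          refine ⟨1 - r⁻¹, r⁻¹, by rw [sub_pos]; exact inv_lt_one_of_one_lt₀ hrgt,
            inv_pos.2 (by linarith), by ring, ?_⟩
          have : u₀ = v + r⁻¹ • (s - v) := by rw [← hu₀v']; abel
          rw [this]
          module
        have := extreme_open_seg hu₀A.1 hvX hsX hmem
        exact hu₀v this.1.symm
    -- strictly exposing functional for Y at q
    obtain ⟨h, hh⟩ := exists_strict_exposing hYfin hq
    rw [← hY] at hh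
    set μ' := (h q - h v) / (f v - t) with hμ'
    set g : (Fin n → ℝ) →L[ℝ] ℝ := h + μ' • f with hg
    have hgapp : ∀ y, g y = h y + μ' * f y := fun y => rfl
    have hftne : f v - t ≠ 0 := by intro hcon; linarith
    have hgq : g q = g v := by
      rw [hgapp, hgapp, hfq, hμ']
      field_simp
      ring
    have hqveq : q = v + lam u₀ • (u₀ - v) := by rw [← hqdef, hpm, hlam]
    have hgu₀ : g u₀ = g v := by
      have h1 : g q = g v + lam u₀ * (g u₀ - g v) := by
        rw [hqveq, hlam]; exact clm_affine g v u₀ _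
      rw [hgq] at h1
      have h2 : lam u₀ * (g u₀ - g v) = 0 := by linarith
      rcases mul_eq_zero.1 h2 with h3 | h3
      · exact absurd h3 hl0.ne'
      · linarith
    have hgs : ∀ s ∈ A, s ≠ u₀ → g s < g v := by
      intro s hsA hsne
      have hpmY : pm s ∈ Y := subset_convexHull ℝ _ (Set.mem_image_of_mem _ hsA)
      have hpsq : pm s ≠ q := fun h' => hsne (huniq s hsA h')
      have h1 : h (pm s) < h q := hh _ hpmY hpsq
      have h2 : g (pm s) < g q := by
        rw [hgapp, hgapp, hfpm s hsA, hfq]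
        linarith
      have h3 : g (pm s) = g v + lam s * (g s - g v) := by
        rw [hpm, hlam]; exact clm_affine g v s _
      rw [hgq] at h2
      rw [h3] at h2
      have h4 : lam s * (g s - g v) < 0 := by linarith
      nlinarith [hlampos s hsA]
    -- the exposed segment
    have hAset : ∀ s ∈ X.extremePoints ℝ, g s ≤ g v := by
      intro s hs
      rw [← hSin] at hs
      rcases hs with hs | hs
      · rw [hs]
      · by_cases h' : s = u₀
        · rw [h', hgu₀]
        · exact (hgs s hs h').le
    have hface : {s | s ∈ X.extremePoints ℝ ∧ g s = g v} = {v, u₀} := by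
      apply Set.Subset.antisymm
      · rintro s ⟨hs, hgsv⟩
        rw [← hSin] at hs
        rcases hs with hs | hs
        · exact Or.inl hs
        · by_cases h' : s = u₀
          · exact Or.inr h'
          · exact absurd hgsv (ne_of_lt (hgs s hs h'))
      · rintro s (hs | hs)
        · rw [hs]; exact ⟨hv, rfl⟩
        · rw [hs]; exact ⟨hu₀A.1, hgu₀⟩
    have hexp : {x | x ∈ X ∧ ∀ y ∈ X, g y ≤ g x} = segment ℝ v u₀ := by
      have h0 := exposed_face_eq g (a := g v) hAset ⟨v, hv, rfl⟩
      rw [hXS] at h0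
      rw [h0, hface, convexHull_pair]
    have hadj : AdjVert X v u₀ := by
      refine ⟨hu₀v.symm, hv, hu₀A.1, fun _ => ⟨g, ?_⟩⟩
      rw [← hexp]
    have hqv' : q - v = lam u₀ • (u₀ - v) := by rw [hqveq]; abel
    rw [hqv']
    exact smul_mem_coneHull hl0.le (subset_coneHull D ⟨u₀, hadj, rfl⟩)
  -- Step C : Y is inside the cone
  have hYsub : ∀ y ∈ Y, y - v ∈ coneHull D := by
    have hYE : convexHull ℝ (Y.extremePoints ℝ) = Y := convexHull_extremePoints_of_finite hYfin
    intro y hy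
    rw [← hYE] at hy
    have hconv : Convex ℝ {p : Fin n → ℝ | p - v ∈ coneHull D} := by
      intro p hp q' hq' a b ha hb hab
      have h1 := (coneHull_convex D) hp hq' ha hb hab
      have h2 : a • p + b • q' - v = a • (p - v) + b • (q' - v) := by
        rw [show (b:ℝ) = 1 - a by linarith]
        module
      rw [Set.mem_setOf_eq, h2]
      exact h1
    exact convexHull_min hB hconv hy
  -- Step D : conclude
  intro x hx
  have hx' : x ∈ convexHull ℝ (insert v A) := by rw [hSin, hXS]; exact hx
  rw [convexHull_insert hAne, mem_convexJoin] at hx'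
  obtain ⟨a', ha', z, hz, hseg⟩ := hx'
  rw [Set.mem_singleton_iff] at ha'
  obtain ⟨a, b, ha, hb, hab, hxeq⟩ := hseg
  rw [ha'] at hxeq
  have hzX : z ∈ X := by
    have : convexHull ℝ A ⊆ X := by rw [← hXS]; exact convexHull_mono Set.diff_subset
    exact this hz
  have hxv : x - v = b • (z - v) := by
    rw [← hxeq, show (a:ℝ) = 1 - b by linarith]
    module
  rcases eq_or_lt_of_le hb with hb0 | hbpos
  · rw [hxv, ← hb0, zero_smul]
    exact zero_mem_coneHull D
  have hfz : f z ≤ m :=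
    convexHull_min hmA (convex_halfSpace_le (f.toLinearMap.isLinear) m) hz
  set lz := (f v - t) / (f v - f z) with hlz
  have hlzpos : 0 < lz := div_pos (by linarith) (by linarith)
  have hlzle : lz ≤ 1 := by
    rw [hlz, div_le_one (by linarith)]
    linarith
  set y := v + lz • (z - v) with hy'
  have hyX : y ∈ X := by
    have hmem : y ∈ segment ℝ v z := ⟨1 - lz, lz, by linarith, hlzpos.le, by ring, by
      rw [hy']; module⟩
    exact hXconv.segment_subset hvX hzX hmem
  have hfy : f y = t := by
    rw [hy', clm_affine, hlz]
    have h2 : f v - f z ≠ 0 := by intro hcon; linarith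
    field_simp
    ring
  have hyY : y ∈ Y := by
    rw [hY]
    exact stepA f hmA hmt htv (by rw [hSin, hXS]; exact hyX) hfy
  have hyv : y - v ∈ coneHull D := hYsub y hyY
  have hzv : z - v = lz⁻¹ • (y - v) := by
    rw [hy', add_sub_cancel_left, smul_smul, inv_mul_cancel₀ hlzpos.ne', one_smul]
  rw [hxv, hzv, smul_smul]
  exact smul_mem_coneHull (mul_nonneg hb (inv_pos.2 hlzpos).le) hyv

lemma coneHull_inter_ker {Dset : Set (Fin n → ℝ)} (l : (Fin n → ℝ) →L[ℝ] ℝ)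
    (hD : ∀ d ∈ Dset, l d ≤ 0) {y : Fin n → ℝ} (hy : y ∈ coneHull Dset) (hly : l y = 0) :
    y ∈ coneHull {d | d ∈ Dset ∧ l d = 0} := by
  rcases hy with h | ⟨c, hc, z, hz, rfl⟩
  · rw [Set.mem_singleton_iff] at h; subst h; exact zero_mem_coneHull _
  rcases eq_or_lt_of_le hc with hc0 | hc0
  · rw [← hc0, zero_smul]; exact zero_mem_coneHull _
  have hlz : l z = 0 := by
    have : l (c • z) = c * l z := by rw [map_smul]; rfl
    rw [this] at hly
    rcases mul_eq_zero.1 hly with h | h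
    · exact absurd h hc0.ne'
    · exact h
  have := mem_convexHull_max l hD hz hlz
  exact Or.inr ⟨c, hc, z, this, rfl⟩

lemma isExposed_inter_hyperplane {Aset : Set (Fin n → ℝ)} (l : (Fin n → ℝ) →L[ℝ] ℝ) {c0 : ℝ}
    (hA : ∀ x ∈ Aset, l x ≤ c0) : IsExposed ℝ Aset (Aset ∩ {x | l x = c0}) := by
  intro hne
  obtain ⟨x₀, hx₀A, hx₀⟩ := hne
  refine ⟨l, ?_⟩
  ext x
  constructor
  · rintro ⟨hxA, hlx⟩
    exact ⟨hxA, fun y hy => (hA y hy).trans (le_of_eq hlx.symm)⟩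
  · rintro ⟨hxA, hmax⟩
    refine ⟨hxA, le_antisymm (hA x hxA) ?_⟩
    calc c0 = l x₀ := hx₀.symm
      _ ≤ l x := hmax x₀ hx₀A

lemma vectorSpan_tangentCone {X : Set (Fin n → ℝ)} (hXp : IsPolytope X)
    {v : Fin n → ℝ} (hv : v ∈ X.extremePoints ℝ) :
    vectorSpan ℝ (tangentCone X v) = vectorSpan ℝ X := by
  apply le_antisymm
  · rw [vectorSpan_def, Submodule.span_le]
    rintro w ⟨p, hp, q, hq, rfl⟩
    obtain ⟨y, hy, rfl⟩ := hp
    obtain ⟨y', hy', rfl⟩ := hq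
    have hyW : ∀ u ∈ coneHull {z | ∃ x, AdjVert X v x ∧ z = x - v},
        u ∈ (vectorSpan ℝ X : Set (Fin n → ℝ)) := by
      intro u hu
      refine coneHull_subset_submodule ?_ hu
      rintro d ⟨x, hadj, rfl⟩
      have hxX : x ∈ X := extremePoints_subset hadj.2.2.1
      have : x -ᵥ v ∈ vectorSpan ℝ X := vsub_mem_vectorSpan ℝ hxX (extremePoints_subset hv)
      simpa using this
    have h1 := hyW y hy
    have h2 := hyW y' hy'
    have hgoal : v + y -ᵥ (v + y') ∈ (vectorSpan ℝ X : Set (Fin n → ℝ)) := by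
      have heq : v + y -ᵥ (v + y') = y - y' := by simp [vsub_eq_sub]
      rw [heq]
      exact Submodule.sub_mem _ h1 h2
    exact hgoal
  · exact vectorSpan_mono ℝ (polytope_subset_tangentCone hXp hv)

lemma vectorSpan_tangentCone_inter {X : Set (Fin n → ℝ)} (hXp : IsPolytope X)
    (l : (Fin n → ℝ) →L[ℝ] ℝ) {c0 : ℝ} (hsupp : ∀ x ∈ X, l x ≤ c0)
    {v : Fin n → ℝ} (hv : v ∈ X.extremePoints ℝ) (hvH : l v = c0) :
    vectorSpan ℝ (tangentCone X v ∩ {x | l x = c0}) = vectorSpan ℝ (X ∩ {x | l x = c0}) := by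
  set D := {z | ∃ x, AdjVert X v x ∧ z = x - v} with hD
  have hD0 : ∀ d ∈ D, l d ≤ 0 := by
    rintro d ⟨x, hadj, rfl⟩
    have hxX : x ∈ X := extremePoints_subset hadj.2.2.1
    have := hsupp x hxX
    rw [map_sub, hvH]
    linarith
  apply le_antisymm
  · rw [vectorSpan_def, Submodule.span_le]
    rintro w ⟨p, hp, q, hq, rfl⟩
    obtain ⟨⟨y, hy, rfl⟩, hpH⟩ := hp
    obtain ⟨⟨y', hy', rfl⟩, hqH⟩ := hq
    have hkW : ∀ u ∈ coneHull D, l u = 0 →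
        u ∈ (vectorSpan ℝ (X ∩ {x | l x = c0}) : Set (Fin n → ℝ)) := by
      intro u hu hlu
      have hmem := coneHull_inter_ker l hD0 hu hlu
      refine coneHull_subset_submodule ?_ hmem
      rintro d ⟨⟨x, hadj, rfl⟩, hld⟩
      have hxX : x ∈ X := extremePoints_subset hadj.2.2.1
      have hxH : l x = c0 := by
        rw [map_sub, hvH] at hld
        linarith
      have : x -ᵥ v ∈ vectorSpan ℝ (X ∩ {x | l x = c0}) :=
        vsub_mem_vectorSpan ℝ ⟨hxX, hxH⟩ ⟨extremePoints_subset hv, hvH⟩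
      simpa using this
    have hly : l y = 0 := by
      have : l (v + y) = c0 := hpH
      rw [map_add, hvH] at this
      linarith
    have hly' : l y' = 0 := by
      have : l (v + y') = c0 := hqH
      rw [map_add, hvH] at this
      linarith
    have h1 := hkW y hy hly
    have h2 := hkW y' hy' hly'
    have hgoal : v + y -ᵥ (v + y') ∈ (vectorSpan ℝ (X ∩ {x | l x = c0}) : Set (Fin n → ℝ)) := by
      have heq : v + y -ᵥ (v + y') = y - y' := by simp [vsub_eq_sub]
      rw [heq]
      exact Submodule.sub_mem _ h1 h2
    exact hgoal
  · apply vectorSpan_mono ℝ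
    apply Set.inter_subset_inter_left
    exact polytope_subset_tangentCone hXp hv

lemma tangentCone_le_halfspace {X : Set (Fin n → ℝ)}
    (l : (Fin n → ℝ) →L[ℝ] ℝ) {c0 : ℝ} (hsupp : ∀ x ∈ X, l x ≤ c0)
    {v : Fin n → ℝ} (hvX : v ∈ X) (hvH : l v = c0) :
    ∀ p ∈ tangentCone X v, l p ≤ c0 := by
  rintro p ⟨y, hy, rfl⟩
  have h0 : ∀ d ∈ {z | ∃ x, AdjVert X v x ∧ z = x - v}, l d ≤ 0 := by
    rintro d ⟨x, hadj, rfl⟩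
    have hxX : x ∈ X := extremePoints_subset hadj.2.2.1
    have := hsupp x hxX
    rw [map_sub, hvH]
    linarith
  have := coneHull_le_zero l h0 hy
  rw [map_add, hvH]
  linarith

/-- The linear functional `x ↦ ∑ i, c i * x i` as a continuous linear map. -/
noncomputable def lfun (c : Fin n → ℝ) : (Fin n → ℝ) →L[ℝ] ℝ :=
  LinearMap.toContinuousLinearMap
    { toFun := fun x => ∑ i, c i * x i
      map_add' := by intro x y; simp [mul_add, Finset.sum_add_distrib]
      map_smul' := by
        intro m x
        simp only [Pi.smul_apply, smul_eq_mul, RingHom.id_apply]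
        rw [Finset.mul_sum]
        exact Finset.sum_congr rfl fun i _ => by ring }

@[simp] lemma lfun_apply (c x : Fin n → ℝ) : lfun c x = ∑ i, c i * x i := rfl

end Main

/-- For a supporting hyperplane `H` of a polytope `X`, the set `X ∩ H` is a
facet of `X` iff `C_v(X) ∩ H` is a facet of the tangent cone `C_v(X)` for every vertex
`v` of `X` lying on `H`. -/
theorem facet_iff_facet_of_tangentCones {n : ℕ} (X : Set (Fin n → ℝ))
    (hX : IsPolytope X) (c : Fin n → ℝ) (c0 : ℝ) (hc : c ≠ 0)
    (H : Set (Fin n → ℝ)) (hH : H = {x | ∑ i, c i * x i = c0})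
    (hsupp : ∀ x ∈ X, ∑ i, c i * x i ≤ c0) (hne : (X ∩ H).Nonempty) :
    IsFacet X (X ∩ H) ↔
      ∀ v ∈ X.extremePoints ℝ ∩ H, IsFacet (tangentCone X v) (tangentCone X v ∩ H) := by
  classical
  set l := lfun c with hl
  have hHset : H = {x | l x = c0} := by rw [hH]; ext x; simp only [hl, lfun_apply]
  have hsupp' : ∀ x ∈ X, l x ≤ c0 := by
    intro x hx; rw [hl, lfun_apply]; exact hsupp x hx
  have hSfin : (X.extremePoints ℝ).Finite := by
    obtain ⟨V, hXV⟩ := hX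
    exact V.finite_toSet.subset (by rw [hXV]; exact extremePoints_convexHull_subset)
  have hXS : convexHull ℝ (X.extremePoints ℝ) = X := by
    obtain ⟨V, hXV⟩ := hX
    conv_lhs => rw [hXV]
    rw [hXV]
    exact convexHull_extremePoints_of_finite V.finite_toSet
  have edim : ∀ v ∈ X.extremePoints ℝ, l v = c0 →
      adim (tangentCone X v ∩ H) = adim (X ∩ H) ∧ adim (tangentCone X v) = adim X := by
    intro v hvE hvl
    constructor
    · rw [hHset]
      unfold adim
      exact congrArg (fun W : Submodule ℝ (Fin n → ℝ) => Module.finrank ℝ W)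
        (vectorSpan_tangentCone_inter hX l hsupp' hvE hvl)
    · unfold adim
      exact congrArg (fun W : Submodule ℝ (Fin n → ℝ) => Module.finrank ℝ W)
        (vectorSpan_tangentCone hX hvE)
  constructor
  · rintro ⟨hexp, hdim⟩ v ⟨hvE, hvH⟩
    have hvl : l v = c0 := by rw [hHset] at hvH; exact hvH
    have hhalf := tangentCone_le_halfspace l hsupp' (extremePoints_subset hvE) hvl
    obtain ⟨e1, e2⟩ := edim v hvE hvl
    constructor
    · rw [hHset]
      exact isExposed_inter_hyperplane l hhalf
    · rw [e1, e2]
      exact hdim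
  · intro hall
    obtain ⟨x₀, hx₀X, hx₀H⟩ := hne
    have hx₀l : l x₀ = c0 := by rw [hHset] at hx₀H; exact hx₀H
    have hSne : (X.extremePoints ℝ).Nonempty := by
      rcases Set.eq_empty_or_nonempty (X.extremePoints ℝ) with he | hne'
      · exfalso
        rw [← hXS, he] at hx₀X
        simp at hx₀X
      · exact hne'
    have hvex : ∃ s ∈ X.extremePoints ℝ, l s = c0 := by
      by_contra hcon
      push_neg at hcon
      obtain ⟨s₁, hs₁, hs₁max⟩ := Set.exists_max_image (X.extremePoints ℝ) l hSfin hSne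
      have hlt : l s₁ < c0 :=
        lt_of_le_of_ne (hsupp' s₁ (extremePoints_subset hs₁)) (hcon s₁ hs₁)
      have hle : l x₀ ≤ l s₁ := by
        have hX0 : x₀ ∈ convexHull ℝ (X.extremePoints ℝ) := by rw [hXS]; exact hx₀X
        exact convexHull_min hs₁max (convex_halfSpace_le (l.toLinearMap.isLinear) (l s₁)) hX0
      linarith
    obtain ⟨v, hvE, hvl⟩ := hvex
    have hvH : v ∈ H := by rw [hHset]; exact hvl
    obtain ⟨_, hdim⟩ := hall v ⟨hvE, hvH⟩
    obtain ⟨e1, e2⟩ := edim v hvE hvl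
    constructor
    · rw [hHset]
      exact isExposed_inter_hyperplane l hsupp'
    · rw [← e1, ← e2]
      exact hdim
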